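/- For the map C₊ at parameters (M₁,M₂) on the curve L⁻: M₁² = -(4/27)(2+M₂)(4-M₂)² (with M₂ ≤ -2 for real solutions since the right side must be nonnegative), there exists a fixed point (y₀,y₀) whose differential has trace -2 (double eigenvalue -1). Conversely, if a fixed point of C₊ has trace of differential equal to -2, then M₁² = -(4/27)(2+M₂)(4-M₂)². -/

import Mathlib

/-- For `C₊`: if `(M₁,M₂)` lies on the curve `L⁻ : M₁² = -(4/27)(2+M₂)(4-M₂)²`
with `M₂ ≤ -2`, then there is a fixed point `(y₀,y₀)` whose differential has
trace `-2` (double eigenvalue `-1`); conversely, if a fixed point of `C₊` has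
trace of the differential equal to `-2`, then `M₁² = -(4/27)(2+M₂)(4-M₂)²`. -/
theorem cubic_henon_plus_period_doubling_curve (M₁ M₂ : ℝ) :
    ((M₂ ≤ -2 ∧ M₁ ^ 2 = -(4 / 27) * (2 + M₂) * (4 - M₂) ^ 2) →
      ∃ y₀ : ℝ, y₀ ^ 3 + (M₂ - 2) * y₀ + M₁ = 0 ∧ M₂ + 3 * y₀ ^ 2 = -2) ∧
    ((∃ y₀ : ℝ, y₀ ^ 3 + (M₂ - 2) * y₀ + M₁ = 0 ∧ M₂ + 3 * y₀ ^ 2 = -2) →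
      M₁ ^ 2 = -(4 / 27) * (2 + M₂) * (4 - M₂) ^ 2) := by
  constructor
  · rintro ⟨hM2, hcurve⟩
    have hne : (2 * (4 - M₂)) ≠ 0 := by nlinarith
    have h4 : (4 - M₂) ≠ 0 := by linarith
    refine ⟨3 * M₁ / (2 * (4 - M₂)), ?_, ?_⟩
    · field_simp
      linear_combination (27 * M₁) * hcurve
    · have hsq : (3 * M₁ / (2 * (4 - M₂))) ^ 2 = -(2 + M₂) / 3 := by
        field_simp
        nlinarith [sq_nonneg (4 - M₂)]
      rw [hsq]; ring
  · rintro ⟨y₀, hfix, htr⟩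
    have h2 : M₂ = -2 - 3 * y₀ ^ 2 := by linarith
    subst h2
    have h1 : M₁ = 2 * y₀ ^ 3 + 4 * y₀ := by linear_combination hfix
    subst h1
    ring
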